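/- Let Y and Z be separated topological vector spaces, let (A_i)_{i∈I} be a family of continuous linear maps from Y to Z, and let G ⊂ Y be a convex compact set. Suppose that for each x ∈ G the orbit {A_i(x) : i ∈ I} is bounded in Z. Then the family is uniformly bounded on G: there exists a bounded set F ⊂ Z such that A_i(G) ⊂ F for all i ∈ I. -/

import Mathlib

open Bornology Set Pointwise Filter Topology

/-- A compact set in a real TVS is von Neumann bounded. -/
lemma isVonNBounded_of_isCompact {Z : Type*} [AddCommGroup Z] [Module ℝ Z]
    [TopologicalSpace Z] [IsTopologicalAddGroup Z] [ContinuousSMul ℝ Z]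
    {K : Set Z} (hK : IsCompact K) : Bornology.IsVonNBounded ℝ K := by
  intro V hV
  obtain ⟨s, ⟨hs, hsbal⟩, hsV⟩ := (nhds_basis_balanced ℝ Z).mem_iff.1 hV
  set U := interior s with hUdef
  have hU0 : (0 : Z) ∈ U := mem_interior_iff_mem_nhds.2 hs
  have hUbal : Balanced ℝ U := hsbal.interior hU0
  have hUopen : IsOpen U := isOpen_interior
  have hcov : K ⊆ ⋃ n : ℕ, ((n : ℝ) + 1) • U := by
    intro x hx
    have habs : Absorbs ℝ U {x} := (absorbent_nhds_zero (hUopen.mem_nhds hU0)) x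
    obtain ⟨r, hr⟩ := absorbs_iff_norm.1 habs
    obtain ⟨n, hn⟩ := exists_nat_ge r
    refine Set.mem_iUnion.2 ⟨n, ?_⟩
    have : r ≤ ‖(n : ℝ) + 1‖ := by
      rw [Real.norm_eq_abs, abs_of_nonneg (by positivity)]
      linarith
    exact hr _ this rfl
  obtain ⟨t, ht⟩ := hK.elim_finite_subcover (fun n : ℕ => ((n : ℝ) + 1) • U)
    (fun n => hUopen.smul₀ (by positivity)) hcov
  refine absorbs_iff_norm.2 ⟨(t.sup id : ℕ) + 1, fun c hc => ?_⟩
  intro x hx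
  obtain ⟨n, hnt, hxn⟩ := Set.mem_iUnion₂.1 (ht hx)
  have hsub : ((n : ℝ) + 1) • U ⊆ c • U := by
    refine hUbal.smul_mono ?_
    rw [Real.norm_eq_abs, abs_of_nonneg (by positivity)]
    have : (n : ℝ) ≤ (t.sup id : ℕ) := by exact_mod_cast Finset.le_sup (f := id) hnt
    linarith
  exact Set.smul_set_mono (hUdef ▸ interior_subset.trans hsV) (hsub hxn)

theorem stmt5 {Y Z : Type*}
    [AddCommGroup Y] [Module ℝ Y] [TopologicalSpace Y] [IsTopologicalAddGroup Y]
    [ContinuousSMul ℝ Y] [T2Space Y]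
    [AddCommGroup Z] [Module ℝ Z] [TopologicalSpace Z] [IsTopologicalAddGroup Z]
    [ContinuousSMul ℝ Z] [T2Space Z]
    {I : Type*} (A : I → Y →L[ℝ] Z) (G : Set Y)
    (hGconv : Convex ℝ G) (hGcomp : IsCompact G)
    (horb : ∀ x ∈ G, Bornology.IsVonNBounded ℝ {z : Z | ∃ i, A i x = z}) :
    ∃ F : Set Z, Bornology.IsVonNBounded ℝ F ∧ ∀ i, (A i) '' G ⊆ F := by
  classical
  refine ⟨⋃ i, A i '' G, ?_, fun i => Set.subset_iUnion (fun i => A i '' G) i⟩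
  rcases G.eq_empty_or_nonempty with rfl | ⟨x₁, hx₁⟩
  · simp only [Set.image_empty, Set.iUnion_empty]
    exact Bornology.isVonNBounded_empty ℝ Z
  intro V hV
  -- choose a closed balanced W with W + W ⊆ V
  obtain ⟨V₂, hV₂, hadd⟩ := exists_nhds_zero_half hV
  obtain ⟨C, hC, hCclosed, hCV₂⟩ := exists_mem_nhds_isClosed_subset hV₂
  obtain ⟨s, ⟨hs, hsbal⟩, hsC⟩ := (nhds_basis_balanced ℝ Z).mem_iff.1 hC
  set W := closure s with hWdef
  have hWbal : Balanced ℝ W := hsbal.closure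
  have hWclosed : IsClosed W := isClosed_closure
  have hWV₂ : W ⊆ V₂ := (closure_minimal hsC hCclosed).trans hCV₂
  have hWnhds : W ∈ 𝓝 (0 : Z) := Filter.mem_of_superset hs subset_closure
  have hS : Balanced ℝ (W + W) := hWbal.add hWbal
  have hSV : W + W ⊆ V := by
    rintro - ⟨a, ha, b, hb, rfl⟩
    exact hadd a (hWV₂ ha) b (hWV₂ hb)
  -- Baire category on the compact set G
  have : CompactSpace ↥G := isCompact_iff_compactSpace.1 hGcomp
  set e : ℕ → Set ↥G := fun n => {x | ∀ i, A i ↑x ∈ ((n : ℝ) + 1) • W} with he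
  have heclosed : ∀ n, IsClosed (e n) := by
    intro n
    have : e n = ⋂ i, (fun x : ↥G => A i ↑x) ⁻¹' (((n : ℝ) + 1) • W) := by
      ext x; simp [he, Set.mem_iInter]
    rw [this]
    exact isClosed_iInter fun i =>
      (hWclosed.smul_of_ne_zero (by positivity)).preimage
        ((A i).continuous.comp continuous_subtype_val)
  have hecov : ⋃ n, e n = Set.univ := by
    refine Set.eq_univ_of_forall fun x => ?_
    obtain ⟨r, hr⟩ := absorbs_iff_norm.1 (horb ↑x x.2 hWnhds)
    obtain ⟨n, hn⟩ := exists_nat_ge r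
    refine Set.mem_iUnion.2 ⟨n, fun i => ?_⟩
    have : r ≤ ‖(n : ℝ) + 1‖ := by
      rw [Real.norm_eq_abs, abs_of_nonneg (by positivity)]; linarith
    exact hr _ this ⟨i, rfl⟩
  have : Nonempty ↥G := ⟨⟨x₁, hx₁⟩⟩
  obtain ⟨n, x₀', hx₀'⟩ := nonempty_interior_of_iUnion_of_closed heclosed hecov
  obtain ⟨O, hOe, hOopen, hx₀'O⟩ := mem_interior.1 hx₀'
  obtain ⟨U, hUopen, hUeq⟩ := isOpen_induced_iff.1 hOopen
  set x₀ : Y := ↑x₀' with hx₀def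
  have hx₀G : x₀ ∈ G := x₀'.2
  have hx₀U : x₀ ∈ U := by rw [← hUeq] at hx₀'O; exact hx₀'O
  have hkey : ∀ x ∈ G, x ∈ U → ∀ i, A i x ∈ ((n : ℝ) + 1) • W := by
    intro x hxG hxU i
    have hmem : (⟨x, hxG⟩ : ↥G) ∈ O := by rw [← hUeq]; exact hxU
    exact hOe hmem i
  -- absorption: G - x₀ is bounded, U - x₀ is a neighborhood of 0
  set U' : Set Y := (fun y => y - x₀) '' U with hU'def
  have hU'0 : U' ∈ 𝓝 (0 : Y) := by
    have hopen : IsOpen U' := (Homeomorph.subRight x₀).isOpenMap U hUopen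
    exact hopen.mem_nhds ⟨x₀, hx₀U, sub_self x₀⟩
  have hK'bdd : Bornology.IsVonNBounded ℝ ((fun y => y - x₀) '' G) :=
    isVonNBounded_of_isCompact (hGcomp.image (continuous_id.sub continuous_const))
  obtain ⟨r', hr'⟩ := absorbs_iff_norm.1 (hK'bdd hU'0)
  set c : ℝ := max r' 1 with hcdef
  have hc1 : (1 : ℝ) ≤ c := le_max_right _ _
  have hc0 : (0 : ℝ) < c := lt_of_lt_of_le one_pos hc1
  have hcnorm : r' ≤ ‖c‖ := by
    rw [Real.norm_eq_abs, abs_of_pos hc0]; exact le_max_left _ _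
  have hGsub : (fun y => y - x₀) '' G ⊆ c • U' := hr' c hcnorm
  -- the key pointwise bound
  have hmain : ∀ x ∈ G, ∀ i, A i x ∈ (c * ((n : ℝ) + 1)) • (W + W) := by
    intro x hxG i
    obtain ⟨u', hu'U', hu'⟩ := hGsub ⟨x, hxG, rfl⟩
    have hu'2 : c • u' = x - x₀ := hu'
    have hu'eq : c⁻¹ • (x - x₀) = u' := by
      rw [← hu'2]; exact inv_smul_smul₀ (ne_of_gt hc0) u'
    obtain ⟨u, huU, huu'⟩ := hu'U'
    have huu'2 : u - x₀ = u' := huu'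
    set z : Y := x₀ + c⁻¹ • (x - x₀) with hzdef
    have hzU : z ∈ U := by
      have hzu : z = u := by rw [hzdef, hu'eq, ← huu'2]; abel
      rwa [hzu]
    have hzG : z ∈ G := by
      have hz : z = (1 - c⁻¹) • x₀ + c⁻¹ • x := by
        rw [hzdef]; rw [smul_sub, sub_smul, one_smul]; abel
      rw [hz]
      exact hGconv hx₀G hxG (by simp; exact inv_le_one_of_one_le₀ hc1)
        (by positivity) (by ring)
    have hz' : A i z ∈ ((n : ℝ) + 1) • W := hkey z hzG hzU i
    have hx₀' : A i x₀ ∈ ((n : ℝ) + 1) • W := hkey x₀ hx₀G hx₀U i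
    obtain ⟨w₁, hw₁, hw₁eq'⟩ := hz'
    have hw₁eq : ((n : ℝ) + 1) • w₁ = A i z := hw₁eq'
    obtain ⟨w₂, hw₂, hw₂eq'⟩ := hx₀'
    have hw₂eq : ((n : ℝ) + 1) • w₂ = A i x₀ := hw₂eq'
    -- A i x = c • A i z - (c-1) • A i x₀
    have hAxeq : A i x = c • A i z + (-(c - 1)) • A i x₀ := by
      have : A i z = A i x₀ + c⁻¹ • (A i x - A i x₀) := by
        rw [hzdef, map_add, map_smul, map_sub]
      rw [this, smul_add, smul_smul, mul_inv_cancel₀ (ne_of_gt hc0), one_smul]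
      module
    -- second term lands in (c*(n+1)) • W by balancedness
    have hterm2 : (-(c - 1)) • A i x₀ ∈ (c * ((n : ℝ) + 1)) • W := by
      have h1 : (-(c - 1)) • A i x₀ ∈ (-(c - 1) * ((n : ℝ) + 1)) • W := by
        rw [← hw₂eq, smul_smul]
        exact Set.smul_mem_smul_set hw₂
      refine hWbal.smul_mono ?_ h1
      rw [Real.norm_eq_abs, Real.norm_eq_abs, abs_mul, abs_mul, abs_neg,
        abs_of_nonneg (by linarith : (0:ℝ) ≤ c - 1), abs_of_pos hc0]
      have : (0:ℝ) ≤ |(n : ℝ) + 1| := abs_nonneg _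
      nlinarith
    obtain ⟨w₃, hw₃, hw₃eq'⟩ := hterm2
    have hw₃eq : (c * ((n : ℝ) + 1)) • w₃ = (-(c - 1)) • A i x₀ := hw₃eq'
    have hterm1 : c • A i z = (c * ((n : ℝ) + 1)) • w₁ := by
      rw [← hw₁eq, smul_smul]
    refine ⟨w₁ + w₃, Set.add_mem_add hw₁ hw₃, ?_⟩
    show (c * ((n : ℝ) + 1)) • (w₁ + w₃) = A i x
    rw [smul_add, ← hterm1, hw₃eq, hAxeq]
  -- conclude absorption
  refine absorbs_iff_norm.2 ⟨c * ((n : ℝ) + 1), fun m hm => ?_⟩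
  rintro y hy
  simp only [Set.mem_iUnion, Set.mem_image] at hy
  obtain ⟨i, x, hxG, rfl⟩ := hy
  have h1 : A i x ∈ (c * ((n : ℝ) + 1)) • (W + W) := hmain x hxG i
  have h2 : (c * ((n : ℝ) + 1)) • (W + W) ⊆ m • (W + W) := by
    refine hS.smul_mono ?_
    rwa [Real.norm_eq_abs, abs_of_pos (by positivity)]
  exact Set.smul_set_mono hSV (h2 h1)
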